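/- Let a : J → [0,1], b ∈ [0,1], with J finite. Define J∞ = { j : b^p ≥ 1 - w and a_j < ((b^p + w - 1)/w)^(1/p) } and J' = { j : a_j ≤ b/w^(1/p) } \ J∞ (assuming a_j ≤ b/w^(1/p) for all j, so J' = J \ J∞). A point x ∈ [0,1]^J satisfies max_j φ(a_j, x_j) = b if and only if J' ≠ ∅, x_j ≤ ((b^p - w·a_j^p)/(1-w))^(1/p) for all j ∈ J', and there exists j₀ ∈ J' with x_{j₀} = ((b^p - w·a_{j₀}^p)/(1-w))^(1/p). -/

import Mathlib

noncomputable def phi (w p a x : ℝ) : ℝ := (w * a ^ p + (1 - w) * x ^ p) ^ (1 / p)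

theorem stmt6 {J : Type*} [Fintype J] [Nonempty J] (w p : ℝ)
    (hw : w ∈ Set.Ioo (0:ℝ) 1) (hp : 0 < p)
    (a : J → ℝ) (ha : ∀ j, a j ∈ Set.Icc (0:ℝ) 1) (b : ℝ) (hb : b ∈ Set.Icc (0:ℝ) 1)
    (hA : ∀ j, a j ≤ b / w ^ (1 / p)) :
    ∀ x : J → ℝ, (∀ j, x j ∈ Set.Icc (0:ℝ) 1) →
      (Finset.univ.sup' Finset.univ_nonempty (fun j => phi w p (a j) (x j)) = b ↔
        ((∃ j, b ^ p < 1 - w ∨ ((b ^ p + w - 1) / w) ^ (1 / p) ≤ a j) ∧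
         (∀ j, (b ^ p < 1 - w ∨ ((b ^ p + w - 1) / w) ^ (1 / p) ≤ a j) →
            x j ≤ ((b ^ p - w * (a j) ^ p) / (1 - w)) ^ (1 / p)) ∧
         (∃ j₀, (b ^ p < 1 - w ∨ ((b ^ p + w - 1) / w) ^ (1 / p) ≤ a j₀) ∧
            x j₀ = ((b ^ p - w * (a j₀) ^ p) / (1 - w)) ^ (1 / p)))) := by
  obtain ⟨hw0, hw1⟩ := hw
  obtain ⟨hb0, hb1⟩ := hb
  have hpne : p ≠ 0 := hp.ne'
  have hw1' : (0:ℝ) < 1 - w := by linarith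
  simp only [one_div] at *
  intro x hx
  -- hA rephrased: w * (a j)^p ≤ b^p
  have hA' : ∀ j, w * (a j) ^ p ≤ b ^ p := by
    intro j
    have h1 : a j * w ^ p⁻¹ ≤ b := by
      rw [div_eq_mul_inv] at hA
      have := mul_le_mul_of_nonneg_right (hA j) (le_of_lt (Real.rpow_pos_of_pos hw0 p⁻¹))
      rwa [mul_assoc, inv_mul_cancel₀ (ne_of_gt (Real.rpow_pos_of_pos hw0 p⁻¹)), mul_one] at this
    have haj0 : (0:ℝ) ≤ a j := (ha j).1
    have h2 : (a j * w ^ p⁻¹) ^ p ≤ b ^ p :=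
      Real.rpow_le_rpow (by positivity) h1 hp.le
    rwa [Real.mul_rpow (ha j).1 (by positivity), Real.rpow_inv_rpow hw0.le hpne,
      mul_comm] at h2
    -- done
  -- C(j) characterization
  have hC : ∀ j, (b ^ p < 1 - w ∨ ((b ^ p + w - 1) / w) ^ p⁻¹ ≤ a j) ↔
      b ^ p ≤ w * (a j) ^ p + (1 - w) := by
    intro j
    have haj0 : (0:ℝ) ≤ a j := (ha j).1
    constructor
    · rintro (h | h)
      · have : 0 ≤ w * (a j) ^ p := by positivity
        linarith
      · by_cases hc : b ^ p + w - 1 ≤ 0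
        · have : 0 ≤ w * (a j) ^ p := by positivity
          linarith
        · push_neg at hc
          have hc' : 0 ≤ (b ^ p + w - 1) / w := by positivity
          have h2 : (((b ^ p + w - 1) / w) ^ p⁻¹) ^ p ≤ (a j) ^ p :=
            Real.rpow_le_rpow (by positivity) h hp.le
          rw [Real.rpow_inv_rpow hc' hpne, div_le_iff₀ hw0] at h2
          linarith [h2]
    · intro h
      rcases lt_or_ge (b ^ p) (1 - w) with h' | h'
      · exact Or.inl h'
      · right
        have hc' : 0 ≤ (b ^ p + w - 1) / w := by
          apply div_nonneg _ hw0.le; linarith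
        rw [Real.rpow_inv_le_iff_of_pos hc' haj0 hp]
        rw [div_le_iff₀ hw0]
        nlinarith
  -- bound B j is well-defined: φ ≤ b ↔ x j ≤ B j when C(j), etc.
  have hxj0 : ∀ j, (0:ℝ) ≤ x j := fun j => (hx j).1
  have hinner : ∀ j, (0:ℝ) ≤ w * (a j) ^ p + (1 - w) * (x j) ^ p := by
    intro j
    have := (ha j).1; have := (hx j).1
    positivity
  have hphile : ∀ j, phi w p (a j) (x j) ≤ b ↔
      w * (a j) ^ p + (1 - w) * (x j) ^ p ≤ b ^ p := by
    intro j
    unfold phi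
    rw [one_div, Real.rpow_inv_le_iff_of_pos (hinner j) hb0 hp]
  have hphieq : ∀ j, phi w p (a j) (x j) = b ↔
      w * (a j) ^ p + (1 - w) * (x j) ^ p = b ^ p := by
    intro j
    unfold phi
    rw [one_div]
    constructor
    · intro h
      have := congrArg (fun t => t ^ p) h
      simpa [Real.rpow_inv_rpow (hinner j) hpne] using this
    · intro h
      rw [h, Real.rpow_rpow_inv hb0 hpne]
  -- for j with C(j): x j ≤ B j ↔ inner ≤ b^p, and x j = B j ↔ inner = b^p
  have hBle : ∀ j, x j ≤ ((b ^ p - w * (a j) ^ p) / (1 - w)) ^ p⁻¹ ↔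
      w * (a j) ^ p + (1 - w) * (x j) ^ p ≤ b ^ p := by
    intro j
    have hnum : 0 ≤ (b ^ p - w * (a j) ^ p) / (1 - w) := by
      apply div_nonneg _ hw1'.le; linarith [hA' j]
    rw [Real.le_rpow_inv_iff_of_pos (hxj0 j) hnum hp, le_div_iff₀ hw1']
    constructor <;> intro h <;> nlinarith
  have hBeq : ∀ j, x j = ((b ^ p - w * (a j) ^ p) / (1 - w)) ^ p⁻¹ ↔
      w * (a j) ^ p + (1 - w) * (x j) ^ p = b ^ p := by
    intro j
    have hnum : 0 ≤ (b ^ p - w * (a j) ^ p) / (1 - w) := by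
      apply div_nonneg _ hw1'.le; linarith [hA' j]
    constructor
    · intro h
      have : (x j) ^ p = (b ^ p - w * (a j) ^ p) / (1 - w) := by
        rw [h, Real.rpow_inv_rpow hnum hpne]
      rw [this]
      field_simp
      ring
    · intro h
      have hxp : (x j) ^ p = (b ^ p - w * (a j) ^ p) / (1 - w) := by
        field_simp
        linarith
      rw [← hxp, Real.rpow_rpow_inv (hxj0 j) hpne]
  constructor
  · intro hsup
    have hle : ∀ j, phi w p (a j) (x j) ≤ b := by
      intro j
      rw [← hsup]
      exact Finset.le_sup' (fun j => phi w p (a j) (x j)) (Finset.mem_univ j)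
    obtain ⟨j₀, -, hj₀⟩ :=
      Finset.exists_mem_eq_sup' (s := (Finset.univ : Finset J))
        (f := fun j => phi w p (a j) (x j)) Finset.univ_nonempty
    have heq : phi w p (a j₀) (x j₀) = b := by rw [hsup] at hj₀; exact hj₀.symm
    have hinn : w * (a j₀) ^ p + (1 - w) * (x j₀) ^ p = b ^ p := (hphieq j₀).1 heq
    have hCj₀ : b ^ p ≤ w * (a j₀) ^ p + (1 - w) := by
      have hx1 : (x j₀) ^ p ≤ 1 := by
        calc (x j₀) ^ p ≤ 1 ^ p := Real.rpow_le_rpow (hxj0 j₀) (hx j₀).2 hp.le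
        _ = 1 := Real.one_rpow p
      nlinarith
    refine ⟨⟨j₀, (hC j₀).2 hCj₀⟩, ?_, ⟨j₀, (hC j₀).2 hCj₀, (hBeq j₀).2 hinn⟩⟩
    intro j _
    exact (hBle j).2 ((hphile j).1 (hle j))
  · rintro ⟨-, hall, j₀, hCj₀, hxj₀⟩
    apply le_antisymm
    · rw [Finset.sup'_le_iff]
      intro j _
      rw [hphile j]
      by_cases hCj : b ^ p ≤ w * (a j) ^ p + (1 - w)
      · exact (hBle j).1 (hall j ((hC j).2 hCj))
      · push_neg at hCj
        have hx1 : (x j) ^ p ≤ 1 := by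
          calc (x j) ^ p ≤ 1 ^ p := Real.rpow_le_rpow (hxj0 j) (hx j).2 hp.le
          _ = 1 := Real.one_rpow p
        nlinarith
    · calc b = phi w p (a j₀) (x j₀) := ((hphieq j₀).2 ((hBeq j₀).1 hxj₀)).symm
      _ ≤ _ := Finset.le_sup' (fun j => phi w p (a j) (x j)) (Finset.mem_univ j₀)
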